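/- The group G₉ = ⟨x, y | x y x y⁻¹ x⁻¹ = y x⁻¹ y x y⁻¹, x⁻¹ y⁻¹ x y x = y⁻¹ x⁻¹ y x y⟩ is left-orderable. -/

import Mathlib

universe u

/-- A group is left-orderable if it admits a left-invariant strict total order. -/
def IsLeftOrderable (G : Type u) [Group G] : Prop :=
  ∃ r : G → G → Prop, IsStrictTotalOrder G r ∧ ∀ h a b : G, r a b → r (h * a) (h * b)

/-- The relators of the virtual knot group
`G₉ = ⟨x, y | x y x y⁻¹ x⁻¹ = y x⁻¹ y x y⁻¹, x⁻¹ y⁻¹ x y x = y⁻¹ x⁻¹ y x y⟩`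
(generators: `x = of 0`, `y = of 1`). -/
def G9Rels : Set (FreeGroup (Fin 2)) :=
  {FreeGroup.of 0 * FreeGroup.of 1 * FreeGroup.of 0 * (FreeGroup.of 1)⁻¹ * (FreeGroup.of 0)⁻¹ *
     (FreeGroup.of 1 * (FreeGroup.of 0)⁻¹ * FreeGroup.of 1 * FreeGroup.of 0 *
       (FreeGroup.of 1)⁻¹)⁻¹,
   (FreeGroup.of 0)⁻¹ * (FreeGroup.of 1)⁻¹ * FreeGroup.of 0 * FreeGroup.of 1 * FreeGroup.of 0 *
     ((FreeGroup.of 1)⁻¹ * (FreeGroup.of 0)⁻¹ * FreeGroup.of 1 * FreeGroup.of 0 *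
       FreeGroup.of 1)⁻¹}

noncomputable section
namespace G9

/-! ### The target group `HH = ℂ ⋊ ℤ`, with `n : ℤ` acting by multiplication by `(1+i)^n`. -/

def τ : ℂ := 1 + Complex.I

lemma τ_ne : τ ≠ 0 := by simp [τ, Complex.ext_iff]

structure HH where
  a : ℂ
  n : ℤ

instance : Mul HH := ⟨fun g h => ⟨g.a + τ ^ g.n * h.a, g.n + h.n⟩⟩
instance : One HH := ⟨⟨0, 0⟩⟩
instance : Inv HH := ⟨fun g => ⟨-(τ ^ (-g.n) * g.a), -g.n⟩⟩

@[simp] lemma mul_a (g h : HH) : (g * h).a = g.a + τ ^ g.n * h.a := rfl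
@[simp] lemma mul_n (g h : HH) : (g * h).n = g.n + h.n := rfl
@[simp] lemma inv_a (g : HH) : (g⁻¹).a = -(τ ^ (-g.n) * g.a) := rfl
@[simp] lemma inv_n (g : HH) : (g⁻¹).n = -g.n := rfl
@[simp] lemma one_a : (1 : HH).a = 0 := rfl
@[simp] lemma one_n : (1 : HH).n = 0 := rfl

@[ext] lemma HH.ext {g h : HH} (h1 : g.a = h.a) (h2 : g.n = h.n) : g = h := by
  cases g; cases h; simp_all

instance : Group HH where
  mul_assoc g h k := by ext <;> simp [zpow_add₀ τ_ne] <;> ring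
  one_mul g := by ext <;> simp
  mul_one g := by ext <;> simp
  inv_mul_cancel g := by ext <;> simp

lemma tau2 : τ ^ (2:ℕ) = 2 * Complex.I := by
  rw [pow_two]; simp [τ, Complex.ext_iff, Complex.mul_re, Complex.mul_im]; norm_num
lemma tau3 : τ ^ (3:ℕ) = -2 + 2 * Complex.I := by
  rw [show (3:ℕ) = 2+1 from rfl, pow_succ, tau2]
  simp [τ, Complex.ext_iff, Complex.mul_re, Complex.mul_im]
lemma tau4 : τ ^ (4:ℕ) = -4 := by
  rw [show (4:ℕ) = 3+1 from rfl, pow_succ, tau3]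
  simp [τ, Complex.ext_iff, Complex.mul_re, Complex.mul_im]; norm_num
lemma tau5 : τ ^ (5:ℕ) = -4 - 4 * Complex.I := by
  rw [show (5:ℕ) = 4+1 from rfl, pow_succ, tau4]
  simp [τ, Complex.ext_iff, Complex.mul_re, Complex.mul_im]

/-! ### The homomorphism `G₉ → HH` -/

def gen : Fin 2 → HH := fun i => if i = 0 then ⟨0, 1⟩ else ⟨-1, 1⟩

lemma gen_rels : ∀ r ∈ G9Rels, FreeGroup.lift gen r = 1 := by
  intro r hr
  rcases hr with h | h <;> subst h <;>
  · simp only [map_mul, map_inv, FreeGroup.lift_apply_of, gen]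
    norm_num
    ext <;> simp
    · field_simp [τ_ne]
      ring_nf
      norm_num [zpow_ofNat, tau2, tau3, tau4, tau5, Complex.ext_iff,
        Complex.mul_re, Complex.mul_im]
      simp [τ]

abbrev G := PresentedGroup G9Rels

def f : G →* HH := PresentedGroup.toGroup gen_rels

def X : G := PresentedGroup.of 0
def Y : G := PresentedGroup.of 1

lemma fX : f X = ⟨0, 1⟩ := by simp [f, X, PresentedGroup.toGroup.of, gen]
lemma fY : f Y = ⟨-1, 1⟩ := by simp [f, Y, PresentedGroup.toGroup.of, gen]

/-! ### The defining relations in `G` -/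

lemma rel_eq_one : ∀ r ∈ G9Rels, PresentedGroup.mk G9Rels r = 1 := fun r hr =>
  (QuotientGroup.eq_one_iff r).mpr (Subgroup.subset_normalClosure hr)

lemma rel1 : X * Y * X * Y⁻¹ * X⁻¹ = Y * X⁻¹ * Y * X * Y⁻¹ := by
  have h := rel_eq_one _ (Set.mem_insert _ _)
  simp only [map_mul, map_inv] at h
  rw [mul_inv_eq_one] at h
  exact h

lemma rel2 : X⁻¹ * Y⁻¹ * X * Y * X = Y⁻¹ * X⁻¹ * Y * X * Y := by
  have h := rel_eq_one _ (Set.mem_insert_of_mem _ rfl)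
  simp only [map_mul, map_inv] at h
  rw [mul_inv_eq_one] at h
  exact h

/-! ### The elements `z₀, z₁, z₂` and their relations -/

def z0 : G := X * Y⁻¹
def z1 : G := X * z0 * X⁻¹
def z2 : G := X * z1 * X⁻¹

lemma lemA : z1⁻¹ * z2 * z1⁻¹ * z0 * z0 = 1 := by
  have : z1⁻¹ * z2 * z1⁻¹ * z0 * z0 =
      (X * Y * X * Y⁻¹ * X⁻¹) * (Y * X⁻¹ * Y * X * Y⁻¹)⁻¹ := by
    simp only [z0, z1, z2]; group
  rw [this, rel1]; group

lemma lemB : z0 * z1⁻¹ * z2 * z0 * z1⁻¹ = 1 := by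
  have : z0 * z1⁻¹ * z2 * z0 * z1⁻¹ =
      X * X * ((X⁻¹ * Y⁻¹ * X * Y * X) * (Y⁻¹ * X⁻¹ * Y * X * Y)⁻¹) * X⁻¹ * X⁻¹ := by
    simp only [z0, z1, z2]; group
  rw [this, rel2]; group

lemma hA2 : z2 = z1 * z0⁻¹ * z0⁻¹ * z1 := by
  rw [← mul_inv_eq_one]
  calc z2 * (z1 * z0⁻¹ * z0⁻¹ * z1)⁻¹
      = z1 * (z1⁻¹ * z2 * z1⁻¹ * z0 * z0) * z1⁻¹ := by
        group; try (rw [zpow_two]; group)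
    _ = 1 := by rw [lemA]; group

lemma hB2 : z2 = z1 * z0⁻¹ * z1 * z0⁻¹ := by
  rw [← mul_inv_eq_one]
  calc z2 * (z1 * z0⁻¹ * z1 * z0⁻¹)⁻¹
      = (z1 * z0⁻¹) * (z0 * z1⁻¹ * z2 * z0 * z1⁻¹) * (z0 * z1⁻¹) := by
        group; try (rw [zpow_two]; group)
    _ = (z1 * z0⁻¹) * 1 * (z0 * z1⁻¹) := by rw [lemB]
    _ = 1 := by group

lemma swap : z0⁻¹ * z1 = z1 * z0⁻¹ := by
  apply mul_left_cancel (a := z1 * z0⁻¹)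
  calc (z1 * z0⁻¹) * (z0⁻¹ * z1) = z1 * z0⁻¹ * z0⁻¹ * z1 := by group
    _ = z2 := hA2.symm
    _ = z1 * z0⁻¹ * z1 * z0⁻¹ := hB2
    _ = (z1 * z0⁻¹) * (z1 * z0⁻¹) := by group

lemma comm : Commute z0 z1 := by
  have h3 := congrArg (fun w => z0 * w * z0) swap
  unfold Commute SemiconjBy
  calc z0 * z1 = z0 * (z1 * z0⁻¹) * z0 := by group
    _ = z0 * (z0⁻¹ * z1) * z0 := h3.symm
    _ = z1 * z0 := by group

lemma conj2 : z2 = z1 ^ (2:ℤ) * z0 ^ (-2:ℤ) := by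
  calc z2 = z1 * z0⁻¹ * z0⁻¹ * z1 := hA2
    _ = z1 * z0⁻¹ * (z0⁻¹ * z1) := by group
    _ = z1 * z0⁻¹ * (z1 * z0⁻¹) := by rw [swap]
    _ = z1 * (z0⁻¹ * z1) * z0⁻¹ := by group
    _ = z1 * (z1 * z0⁻¹) * z0⁻¹ := by rw [swap]
    _ = z1 ^ (2:ℤ) * z0 ^ (-2:ℤ) := by group; rw [zpow_two]

/-! ### Powers `F p q = z0^p * z1^q` and the conjugation formula -/

def F (p q : ℤ) : G := z0 ^ p * z1 ^ q

lemma F_mul (p q p' q' : ℤ) : F p q * F p' q' = F (p + p') (q + q') := by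
  have c : Commute (z0 ^ p') (z1 ^ q) := comm.zpow_zpow p' q
  unfold F
  rw [zpow_add, zpow_add]
  calc z0 ^ p * z1 ^ q * (z0 ^ p' * z1 ^ q')
      = z0 ^ p * (z1 ^ q * z0 ^ p') * z1 ^ q' := by group
    _ = z0 ^ p * (z0 ^ p' * z1 ^ q) * z1 ^ q' := by rw [c.symm.eq]
    _ = z0 ^ p * z0 ^ p' * (z1 ^ q * z1 ^ q') := by group

lemma F_one : F 0 0 = 1 := by simp [F]

lemma conj_z0 : X * z0 * X⁻¹ = z1 := rfl

lemma conj_F (p q : ℤ) : X * F p q * X⁻¹ = F (-2*q) (p + 2*q) := by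
  have : X * F p q * X⁻¹ = (X * z0 * X⁻¹) ^ p * (X * z1 * X⁻¹) ^ q := by
    unfold F; rw [conj_zpow, conj_zpow]; group
  rw [this, conj_z0]
  show z1 ^ p * z2 ^ q = _
  rw [conj2]
  have c : Commute (z1 ^ (2:ℤ)) (z0 ^ (-2:ℤ)) := comm.symm.zpow_zpow _ _
  rw [c.mul_zpow]
  rw [← zpow_mul, ← zpow_mul]
  have c2 : Commute (z1 ^ p) (z0 ^ (-2*q)) := (comm.zpow_zpow _ _).symm
  calc z1 ^ p * (z1 ^ (2*q) * z0 ^ (-2*q))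
      = z1 ^ p * z1 ^ (2*q) * z0 ^ (-2*q) := by group
    _ = z1 ^ (p + 2*q) * z0 ^ (-2*q) := by rw [← zpow_add]
    _ = z0 ^ (-2*q) * z1 ^ (p + 2*q) := (comm.zpow_zpow (-2*q) (p + 2*q)).symm.eq
    _ = F (-2*q) (p + 2*q) := rfl

/-! ### Normal form: every element is `X^(-j) * F p q * X^j * X^d` -/

def C (j : ℕ) (p q : ℤ) : G := X ^ (-(j:ℤ)) * F p q * X ^ (j:ℤ)

lemma C_zero (p q : ℤ) : C 0 p q = F p q := by simp [C]

lemma C_raise (j : ℕ) (p q : ℤ) : C j p q = C (j+1) (-2*q) (p+2*q) := by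
  unfold C
  rw [← conj_F]
  push_cast
  group

lemma C_raise_le {j J : ℕ} (h : j ≤ J) (p q : ℤ) : ∃ p' q', C j p q = C J p' q' := by
  induction J with
  | zero => exact ⟨p, q, by rw [Nat.le_zero.mp h]⟩
  | succ n ih =>
    rcases Nat.lt_or_ge j (n+1) with hlt | hge
    · obtain ⟨p', q', hpq⟩ := ih (Nat.lt_succ_iff.mp hlt)
      exact ⟨-2*q', p'+2*q', by rw [hpq, C_raise]⟩
    · exact ⟨p, q, by rw [Nat.le_antisymm h hge]⟩

lemma C_mul (j : ℕ) (p q p' q' : ℤ) : C j p q * C j p' q' = C j (p+p') (q+q') := by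
  unfold C
  rw [← F_mul p q p' q']
  group

lemma C_inv (j : ℕ) (p q : ℤ) : (C j p q)⁻¹ = C j (-p) (-q) := by
  unfold C
  have : F p q * F (-p) (-q) = 1 := by rw [F_mul]; simp [F_one]
  rw [eq_comm, eq_inv_iff_mul_eq_one]
  calc X ^ (-(j:ℤ)) * F (-p) (-q) * X ^ (j:ℤ) * (X ^ (-(j:ℤ)) * F p q * X ^ (j:ℤ))
      = X ^ (-(j:ℤ)) * (F (-p) (-q) * F p q) * X ^ (j:ℤ) := by group
    _ = 1 := by rw [F_mul, neg_add_cancel, neg_add_cancel, F_one]; group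

lemma C_shift (d : ℤ) (j : ℕ) (p q : ℤ) :
    ∃ (j' : ℕ) (p' q' : ℤ), X ^ d * C j p q * X ^ (-d) = C j' p' q' := by
  obtain ⟨p1, q1, h1⟩ := C_raise_le (Nat.le_add_right j d.toNat) p q
  set J := j + d.toNat with hJ
  have hdJ : d ≤ (J : ℤ) := by
    have := Int.self_le_toNat d
    push_cast [hJ]
    omega
  refine ⟨(↑J - d).toNat, p1, q1, ?_⟩
  have hc : (((↑J - d).toNat : ℤ)) = (J:ℤ) - d := Int.toNat_of_nonneg (by omega)
  rw [h1]
  unfold C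
  rw [hc]
  group

lemma inS_mul {g h : G} (hg : ∃ (j : ℕ) (p q d : ℤ), g = C j p q * X ^ d)
    (hh : ∃ (k : ℕ) (p' q' e : ℤ), h = C k p' q' * X ^ e) :
    ∃ (l : ℕ) (P Q D : ℤ), g * h = C l P Q * X ^ D := by
  obtain ⟨j, p, q, d, rfl⟩ := hg
  obtain ⟨k, p', q', e, rfl⟩ := hh
  obtain ⟨k2, p2, q2, h2⟩ := C_shift d k p' q'
  obtain ⟨p3, q3, h3⟩ := C_raise_le (Nat.le_max_left j k2) p q
  obtain ⟨p4, q4, h4⟩ := C_raise_le (Nat.le_max_right j k2) p2 q2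
  refine ⟨max j k2, p3 + p4, q3 + q4, d + e, ?_⟩
  have : C j p q * X ^ d * (C k p' q' * X ^ e)
      = C j p q * (X ^ d * C k p' q' * X ^ (-d)) * X ^ (d + e) := by group
  rw [this, h2, h3, h4, C_mul]

lemma inS_inv {g : G} (hg : ∃ (j : ℕ) (p q d : ℤ), g = C j p q * X ^ d) :
    ∃ (l : ℕ) (P Q D : ℤ), g⁻¹ = C l P Q * X ^ D := by
  obtain ⟨j, p, q, d, rfl⟩ := hg
  obtain ⟨k2, p2, q2, h2⟩ := C_shift (-d) j (-p) (-q)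
  refine ⟨k2, p2, q2, -d, ?_⟩
  have : (C j p q * X ^ d)⁻¹ = X ^ (-d) * (C j p q)⁻¹ * X ^ (-(-d)) * X ^ (-d) := by group
  rw [this, C_inv, h2]

def SS : Subgroup G where
  carrier := {g | ∃ (j : ℕ) (p q d : ℤ), g = C j p q * X ^ d}
  one_mem' := ⟨0, 0, 0, 0, by simp [C_zero, F_one]⟩
  mul_mem' := fun ha hb => inS_mul ha hb
  inv_mem' := fun ha => inS_inv ha

lemma X_mem : X ∈ SS := ⟨0, 0, 0, 1, by simp [C_zero, F_one]⟩

lemma Y_mem : Y ∈ SS := by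
  refine ⟨0, -1, 0, 1, ?_⟩
  rw [C_zero]
  have : F (-1) 0 = z0⁻¹ := by simp [F]
  rw [this]
  simp only [z0]
  group

lemma SS_top : ∀ g : G, g ∈ SS := by
  have h1 : Subgroup.closure (Set.range (PresentedGroup.of : Fin 2 → G)) = ⊤ :=
    PresentedGroup.closure_range_of G9Rels
  have h2 : Set.range (PresentedGroup.of : Fin 2 → G) ⊆ SS := by
    rintro _ ⟨i, rfl⟩
    fin_cases i
    · exact X_mem
    · exact Y_mem
  intro g
  have : (⊤ : Subgroup G) ≤ SS := by
    rw [← h1]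
    exact (Subgroup.closure_le SS).mpr h2
  exact this trivial

/-! ### Computing `f` on normal forms; injectivity -/

def embC : Multiplicative ℂ →* HH where
  toFun c := ⟨Multiplicative.toAdd c, 0⟩
  map_one' := by ext <;> simp
  map_mul' a b := by ext <;> simp

def embZ : Multiplicative ℤ →* HH where
  toFun n := ⟨0, Multiplicative.toAdd n⟩
  map_one' := by ext <;> simp
  map_mul' a b := by ext <;> simp

lemma mk_a_zpow (a : ℂ) (n : ℤ) : (⟨a, 0⟩ : HH) ^ n = ⟨n * a, 0⟩ := by
  have h1 : (⟨a, 0⟩ : HH) = embC (Multiplicative.ofAdd a) := rfl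
  rw [h1, ← map_zpow]
  have h2 : (Multiplicative.ofAdd a) ^ n = Multiplicative.ofAdd (n • a) := rfl
  rw [h2]
  show (⟨n • a, 0⟩ : HH) = _
  rw [zsmul_eq_mul]

lemma mk_n_zpow (n : ℤ) : (⟨0, 1⟩ : HH) ^ n = ⟨0, n⟩ := by
  have h1 : (⟨(0:ℂ), 1⟩ : HH) = embZ (Multiplicative.ofAdd 1) := rfl
  rw [h1, ← map_zpow]
  have h2 : (Multiplicative.ofAdd (1:ℤ)) ^ n = Multiplicative.ofAdd (n • (1:ℤ)) := rfl
  rw [h2]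
  show (⟨0, n • (1:ℤ)⟩ : HH) = _
  simp

lemma fz0 : f z0 = ⟨1, 0⟩ := by
  rw [z0, map_mul, map_inv, fX, fY]
  ext <;> simp
  exact mul_inv_cancel₀ τ_ne

lemma fz1 : f z1 = ⟨τ, 0⟩ := by
  rw [z1, map_mul, map_mul, map_inv, fX, fz0]
  ext <;> simp

lemma fF' (p q : ℤ) : f (F p q) = ⟨(p:ℂ) + (q:ℂ) * τ, 0⟩ := by
  rw [F, map_mul, map_zpow, map_zpow, fz0, fz1, mk_a_zpow, mk_a_zpow]
  ext <;> simp

lemma fXpow (n : ℤ) : f (X ^ n) = ⟨0, n⟩ := by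
  rw [map_zpow, fX, mk_n_zpow]

lemma f_nf (j : ℕ) (p q d : ℤ) :
    f (C j p q * X ^ d) = ⟨τ ^ (-(j:ℤ)) * ((p:ℂ) + (q:ℂ) * τ), d⟩ := by
  rw [map_mul, C, map_mul, map_mul, fF', fXpow, fXpow, fXpow]
  ext <;> simp [zpow_add₀ τ_ne] <;> ring

lemma f_inj_one : ∀ g : G, f g = 1 → g = 1 := by
  intro g hg
  obtain ⟨j, p, q, d, rfl⟩ := SS_top g
  rw [f_nf] at hg
  have ha : τ ^ (-(j:ℤ)) * ((p:ℂ) + (q:ℂ) * τ) = 0 := congrArg HH.a hg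
  have hd : d = 0 := congrArg HH.n hg
  have hpq : (p:ℂ) + (q:ℂ) * τ = 0 := by
    rcases mul_eq_zero.mp ha with h | h
    · exact absurd h (zpow_ne_zero _ τ_ne)
    · exact h
  have hre : (p:ℝ) + (q:ℝ) = 0 := by
    have := congrArg Complex.re hpq
    simpa [τ, Complex.add_re, Complex.mul_re] using this
  have him : (q:ℝ) = 0 := by
    have := congrArg Complex.im hpq
    simpa [τ, Complex.add_im, Complex.mul_im] using this
  have hq : q = 0 := by exact_mod_cast him
  have hp : p = 0 := by
    have : (p:ℝ) = 0 := by rw [him] at hre; linarith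
    exact_mod_cast this
  rw [hp, hq, hd]
  simp [C, F_one]

lemma f_inj {a b : G} (h : f a = f b) : a = b := by
  have : f (a⁻¹ * b) = 1 := by rw [map_mul, map_inv, h]; group
  have h2 := f_inj_one _ this
  rwa [inv_mul_eq_one] at h2

/-! ### The left-invariant order on `HH`, pulled back to `G` -/

def Pos (g : HH) : Prop :=
  0 < g.n ∨ (g.n = 0 ∧ (0 < g.a.re ∨ (g.a.re = 0 ∧ 0 < g.a.im)))

lemma pos_mul {g h : HH} (hg : Pos g) (hh : Pos h) : Pos (g * h) := by
  unfold Pos at *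
  rcases hg with hn | ⟨hn0, ha⟩
  · rcases hh with hm | ⟨hm0, _⟩
    · exact Or.inl (by simp; omega)
    · exact Or.inl (by simp; omega)
  · rcases hh with hm | ⟨hm0, hb⟩
    · exact Or.inl (by simp; omega)
    · refine Or.inr ⟨by simp [hn0, hm0], ?_⟩
      simp only [mul_a, hn0, zpow_zero, one_mul, Complex.add_re, Complex.add_im]
      rcases ha with h1 | ⟨h2, h3⟩ <;> rcases hb with h1' | ⟨h2', h3'⟩
      · exact Or.inl (by linarith)
      · exact Or.inl (by linarith)
      · exact Or.inl (by linarith)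
      · exact Or.inr ⟨by linarith, by linarith⟩

lemma pos_one : ¬ Pos 1 := by
  unfold Pos
  simp

lemma pos_trichotomy (g : HH) : Pos g ∨ g = 1 ∨ Pos g⁻¹ := by
  obtain ⟨a, n⟩ := g
  rcases lt_trichotomy 0 n with hn | hn | hn
  · exact Or.inl (Or.inl hn)
  · subst hn
    have hinv : (⟨a, (0:ℤ)⟩ : HH)⁻¹ = ⟨-a, 0⟩ := by ext <;> simp
    rcases lt_trichotomy 0 a.re with h | h | h
    · exact Or.inl (Or.inr ⟨rfl, Or.inl h⟩)
    · rcases lt_trichotomy 0 a.im with h' | h' | h'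
      · exact Or.inl (Or.inr ⟨rfl, Or.inr ⟨h.symm, h'⟩⟩)
      · refine Or.inr (Or.inl ?_)
        have ha : a = 0 := Complex.ext h.symm h'.symm
        ext <;> simp [ha]
      · refine Or.inr (Or.inr ?_)
        rw [hinv]
        refine Or.inr ⟨rfl, Or.inr ⟨by simp [← h], by simp; linarith⟩⟩
    · refine Or.inr (Or.inr ?_)
      rw [hinv]
      exact Or.inr ⟨rfl, Or.inl (by simp; linarith)⟩
  · exact Or.inr (Or.inr (Or.inl (by simp; omega)))

end G9
end

/-- The virtual knot group `G₉` is left-orderable. -/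
theorem G9_leftOrderable : IsLeftOrderable (PresentedGroup G9Rels) := by
  refine ⟨fun a b => G9.Pos ((G9.f a)⁻¹ * G9.f b),
    { trichotomous := ?_, irrefl := ?_, trans := ?_ }, ?_⟩
  · intro a b hab hba
    rcases G9.pos_trichotomy ((G9.f a)⁻¹ * G9.f b) with h | h | h
    · exact absurd h hab
    · apply G9.f_inj
      rwa [inv_mul_eq_one] at h
    · have he : ((G9.f a)⁻¹ * G9.f b)⁻¹ = (G9.f b)⁻¹ * G9.f a := by group
      rw [he] at h
      exact absurd h hba
  · intro a
    rw [inv_mul_cancel]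
    exact G9.pos_one
  · intro a b c h1 h2
    have h3 := G9.pos_mul h1 h2
    rwa [show ((G9.f a)⁻¹ * G9.f b) * ((G9.f b)⁻¹ * G9.f c)
        = (G9.f a)⁻¹ * G9.f c by group] at h3
  · intro h a b hab
    have he : (G9.f (h * a))⁻¹ * G9.f (h * b) = (G9.f a)⁻¹ * G9.f b := by
      rw [map_mul, map_mul]; group
    rwa [he]
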